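/- Let e : L → C be a canonical extension of a bounded lattice L, let T ⊆ L be finite and b ∈ L. The following are equivalent: (i) b ∈ ⟨T⟩_ai; (ii) b̂ ⊆ ⋃_{a∈T} â, where ĉ := {x ∈ J∞(C) : x ≤ e(c)}; (iii) there exists a finite join-admissible M ⊆ L with every element of M below some element of T and b = ⋁M. -/

import Mathlib

/-- A finite subset `M` of a bounded lattice is join-admissible if its join
distributes over all meets with elements of the lattice. -/
def JoinAdmissible {L : Type*} [Lattice L] [BoundedOrder L] (M : Finset L) : Prop :=
  ∀ a : L, a ⊓ M.sup id = M.sup fun m => a ⊓ m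

/-- An a-ideal: a downward-closed subset closed under admissible joins. -/
def IsAIdeal {L : Type*} [Lattice L] [BoundedOrder L] (A : Set L) : Prop :=
  (∀ a ∈ A, ∀ b, b ≤ a → b ∈ A) ∧
  ∀ M : Finset L, ↑M ⊆ A → JoinAdmissible M → M.sup id ∈ A

/-- The smallest a-ideal containing `T`. -/
def aIdealGen {L : Type*} [Lattice L] [BoundedOrder L] (T : Set L) : Set L :=
  ⋂₀ {A : Set L | IsAIdeal A ∧ T ⊆ A}

/-- An element `x` of a complete lattice is completely join-irreducible if
`x ∈ S` whenever `x = ⨆ S`. -/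
def CompletelyJoinIrreducible {C : Type*} [CompleteLattice C] (x : C) : Prop :=
  ∀ S : Set C, x = sSup S → x ∈ S

/-- An element `y` of a complete lattice is completely meet-irreducible if
`y ∈ S` whenever `y = ⨅ S`. -/
def CompletelyMeetIrreducible {C : Type*} [CompleteLattice C] (y : C) : Prop :=
  ∀ S : Set C, y = sInf S → y ∈ S

/-- `e : L → C` is a canonical extension of the bounded lattice `L`: an injective
bounded-lattice homomorphism into a complete lattice `C` which is dense and compact. -/
def IsCanonicalExtension {L C : Type*} [Lattice L] [BoundedOrder L] [CompleteLattice C]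
    (e : L → C) : Prop :=
  Function.Injective e ∧
  (∀ a b : L, e (a ⊓ b) = e a ⊓ e b) ∧
  (∀ a b : L, e (a ⊔ b) = e a ⊔ e b) ∧
  e ⊥ = ⊥ ∧ e ⊤ = ⊤ ∧
  -- denseness
  (∀ u : C,
    u = sSup {v : C | ∃ S : Set L, v = sInf (e '' S) ∧ v ≤ u} ∧
    u = sInf {v : C | ∃ T : Set L, v = sSup (e '' T) ∧ u ≤ v}) ∧
  -- compactness
  (∀ S T : Set L, sInf (e '' S) ≤ sSup (e '' T) →
    ∃ S' T' : Finset L, ↑S' ⊆ S ∧ ↑T' ⊆ T ∧ S'.inf id ≤ T'.sup id)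

/-- `â`: the set of completely join-irreducible elements of `C` below `e a`. -/
def hatSet {L C : Type*} [Lattice L] [BoundedOrder L] [CompleteLattice C]
    (e : L → C) (a : L) : Set C :=
  {x : C | CompletelyJoinIrreducible x ∧ x ≤ e a}

namespace CEaux

variable {L C : Type*} [Lattice L] [BoundedOrder L] [CompleteLattice C] {e : L → C}

lemma mono (h : IsCanonicalExtension e) : Monotone e := by
  intro a b hab
  have := h.2.1 a b
  rw [inf_eq_left.mpr hab] at this
  exact this.le.trans inf_le_right

lemma le_iff (h : IsCanonicalExtension e) {a b : L} : e a ≤ e b ↔ a ≤ b := by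
  refine ⟨fun hab => ?_, fun hab => mono h hab⟩
  have : e (a ⊓ b) = e a := by rw [h.2.1]; exact inf_eq_left.mpr hab
  have := h.1 this
  exact inf_eq_left.mp this

lemma finsup (h : IsCanonicalExtension e) (M : Finset L) :
    e (M.sup id) = M.sup fun m => e m := by
  classical
  induction M using Finset.induction with
  | empty => simpa using h.2.2.2.1
  | insert _ _ hx ih => simp [h.2.2.1, ih]

lemma fininf (h : IsCanonicalExtension e) (M : Finset L) :
    e (M.inf id) = M.inf fun m => e m := by
  classical
  induction M using Finset.induction with
  | empty => simpa using h.2.2.2.2.1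
  | insert _ _ hx ih => simp [h.2.1, ih]

lemma closed_of_cji (h : IsCanonicalExtension e) {x : C}
    (hx : CompletelyJoinIrreducible x) : x = sInf (e '' {a : L | x ≤ e a}) := by
  have hd := (h.2.2.2.2.2.1 x).1
  have hmem := hx _ hd
  obtain ⟨A, hA, -⟩ := hmem
  have hAF : A ⊆ {a : L | x ≤ e a} := by
    intro a ha
    exact hA.le.trans (sInf_le ⟨a, ha, rfl⟩)
  refine le_antisymm (le_sInf ?_) ((sInf_le_sInf (Set.image_mono (f := e) hAF)).trans hA.ge)
  rintro v ⟨a, ha, rfl⟩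
  exact ha

lemma prime (h : IsCanonicalExtension e) {M : Finset L} (hM : JoinAdmissible M) {x : C}
    (hx : CompletelyJoinIrreducible x) (hle : x ≤ e (M.sup id)) : ∃ m ∈ M, x ≤ e m := by
  classical
  set F : Set L := {a : L | x ≤ e a} with hF
  have hxF : x = sInf (e '' F) := closed_of_cji h hx
  set y := sSup ((fun m => x ⊓ e m) '' (M : Set L)) with hy
  have hxy : x ≤ y := by
    have hd := (h.2.2.2.2.2.1 y).2
    rw [hd]
    apply le_sInf
    rintro v ⟨I, rfl, hyv⟩
    have key : ∀ m ∈ M, ∃ S' I' : Finset L,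
        ↑S' ⊆ F ∪ {m} ∧ ↑I' ⊆ I ∧ S'.inf id ≤ I'.sup id := by
      intro m hm
      apply h.2.2.2.2.2.2
      have : sInf (e '' (F ∪ {m})) = x ⊓ e m := by
        rw [Set.image_union, sInf_union, Set.image_singleton, sInf_singleton, ← hxF]
      rw [this]
      have hmem : x ⊓ e m ∈ (fun m => x ⊓ e m) '' (M : Set L) := ⟨m, hm, rfl⟩
      exact le_trans (le_sSup hmem) hyv
    choose! S' I' hS hI hSI using key
    set G : Finset L := M.biUnion (fun m => (S' m).erase m) with hG
    have hGF : ∀ g ∈ G, g ∈ F := by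
      intro g hg
      rw [hG, Finset.mem_biUnion] at hg
      obtain ⟨m, hm, hgm⟩ := hg
      have h1 := Finset.ne_of_mem_erase hgm
      have h2 := hS m hm (Finset.mem_of_mem_erase hgm)
      rcases h2 with h2 | h2
      · exact h2
      · exact absurd h2 h1
    set a := G.inf id with ha
    have hxa : x ≤ e a := by
      rw [ha, fininf h]
      exact Finset.le_inf fun g hg => hGF g hg
    set It : Finset L := M.biUnion I' with hIt
    have hItI : (It : Set L) ⊆ I := by
      intro i hi
      rw [hIt] at hi
      simp only [Finset.coe_biUnion, Set.mem_iUnion] at hi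
      obtain ⟨m, hm, him⟩ := hi
      exact hI m hm him
    have step : ∀ m ∈ M, a ⊓ m ≤ It.sup id := by
      intro m hm
      have h1 : a ⊓ m ≤ (S' m).inf id := by
        apply Finset.le_inf
        intro s hs
        by_cases hsm : s = m
        · subst hsm; exact inf_le_right
        · refine inf_le_left.trans ?_
          exact Finset.inf_le (Finset.mem_biUnion.mpr ⟨m, hm, Finset.mem_erase.mpr ⟨hsm, hs⟩⟩)
      refine h1.trans ((hSI m hm).trans ?_)
      exact Finset.sup_mono (Finset.subset_biUnion_of_mem I' hm)
    have adm : a ⊓ M.sup id ≤ It.sup id := by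
      rw [hM a]
      exact Finset.sup_le step
    have : x ≤ e (a ⊓ M.sup id) := by
      rw [h.2.1]
      exact le_inf hxa hle
    refine this.trans (le_trans (mono h adm) ?_)
    rw [finsup h]
    exact Finset.sup_le fun i hi => le_sSup ⟨i, hItI hi, rfl⟩
  have hyx : y ≤ x := by
    apply sSup_le
    rintro v ⟨m, hm, rfl⟩
    exact inf_le_left
  have hxy' : x = sSup ((fun m => x ⊓ e m) '' (M : Set L)) := le_antisymm hxy hyx
  obtain ⟨m, hm, hxm⟩ := hx _ hxy'
  exact ⟨m, hm, le_trans (le_of_eq hxm.symm) inf_le_right⟩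

lemma sep (h : IsCanonicalExtension e) {u v : C} (huv : ¬ u ≤ v) :
    ∃ x : C, CompletelyJoinIrreducible x ∧ x ≤ u ∧ ¬ x ≤ v := by
  classical
  -- find closed p ≤ u with ¬ p ≤ v
  have hd := (h.2.2.2.2.2.1 u).1
  have : ¬ ∀ w ∈ {w : C | ∃ S : Set L, w = sInf (e '' S) ∧ w ≤ u}, w ≤ v := by
    intro hall
    exact huv (hd.le.trans (sSup_le hall))
  push_neg at this
  obtain ⟨p, ⟨S₀, hp, hpu⟩, hpv⟩ := this
  -- find open q ≥ v with ¬ p ≤ q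
  have hd2 := (h.2.2.2.2.2.1 v).2
  have : ¬ ∀ w ∈ {w : C | ∃ T : Set L, w = sSup (e '' T) ∧ v ≤ w}, p ≤ w := by
    intro hall
    exact hpv (le_sInf hall |>.trans hd2.ge)
  push_neg at this
  obtain ⟨q, ⟨I, hq, hvq⟩, hpq⟩ := this
  -- Zorn
  set P : Set (Set L) := {A : Set L | S₀ ⊆ A ∧ ¬ sInf (e '' A) ≤ q} with hP
  have hS₀P : S₀ ∈ P := ⟨subset_rfl, by rwa [← hp]⟩
  have hchain : ∀ c ⊆ P, IsChain (· ⊆ ·) c → c.Nonempty →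
      ∃ ub ∈ P, ∀ s ∈ c, s ⊆ ub := by
    intro c hcP hc hne
    refine ⟨⋃₀ c, ⟨?_, ?_⟩, fun s hs => Set.subset_sUnion_of_mem hs⟩
    · obtain ⟨A, hA⟩ := hne
      exact (hcP hA).1.trans (Set.subset_sUnion_of_mem hA)
    · intro hcon
      rw [hq] at hcon
      obtain ⟨A', I', hA', hI', hAI⟩ := h.2.2.2.2.2.2 _ _ hcon
      -- A' finite subset of ⋃₀ c lies in some member
      have hgen : ∀ A'' : Finset L, (A'' : Set L) ⊆ ⋃₀ c → ∃ A ∈ c, (A'' : Set L) ⊆ A := by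
        intro A''
        induction A'' using Finset.induction with
        | empty =>
          intro _
          obtain ⟨A₁, hA₁⟩ := hne
          exact ⟨A₁, hA₁, by simp⟩
        | @insert a s has ih =>
          intro hA''
          obtain ⟨B, hB, hsB⟩ := ih (fun x hx => hA'' (by simp [hx]))
          have haU : a ∈ ⋃₀ c := hA'' (by simp)
          obtain ⟨B', hB', haB'⟩ := haU
          rcases hc.total hB hB' with h1 | h1
          · exact ⟨B', hB', by
              intro x hx
              rcases Finset.mem_insert.mp (by exact_mod_cast hx) with rfl | hx'
              · exact haB'
              · exact h1 (hsB hx')⟩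
          · exact ⟨B, hB, by
              intro x hx
              rcases Finset.mem_insert.mp (by exact_mod_cast hx) with rfl | hx'
              · exact h1 haB'
              · exact hsB hx'⟩
      obtain ⟨A, hAc, hA'A⟩ := hgen A' hA'
      apply (hcP hAc).2
      have h1 : sInf (e '' A) ≤ e (A'.inf id) := by
        rw [fininf h]
        exact Finset.le_inf fun s hs => sInf_le ⟨s, hA'A hs, rfl⟩
      refine h1.trans ((mono h hAI).trans ?_)
      rw [finsup h, hq]
      exact Finset.sup_le fun i hi => le_sSup ⟨i, hI' hi, rfl⟩
  obtain ⟨A, hS₀A, hAmax⟩ := zorn_subset_nonempty P hchain S₀ hS₀P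
  set x := sInf (e '' A) with hxdef
  have hxq : ¬ x ≤ q := hAmax.1.2
  have hxp : x ≤ p := by
    rw [hp]
    exact sInf_le_sInf (Set.image_mono (f := e) hS₀A)
  refine ⟨x, ?_, hxp.trans hpu, fun hxv => hxq (hxv.trans hvq)⟩
  -- x is completely join-irreducible
  intro S hxS
  by_contra hxnS
  apply hxq
  rw [hxS]
  apply sSup_le
  intro s hs
  have hsx : s ≤ x := hxS ▸ le_sSup hs
  have hsnex : s ≠ x := fun hh => hxnS (hh ▸ hs)
  -- every closed below s is ≤ q
  have hds := (h.2.2.2.2.2.1 s).1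
  rw [hds]
  apply sSup_le
  rintro w ⟨B, hw, hws⟩
  by_contra hwq
  -- A ∪ B ∈ P
  have hw' : sInf (e '' (A ∪ B)) = w := by
    rw [Set.image_union, sInf_union, ← hxdef, ← hw]
    exact inf_eq_right.mpr ((hws.trans hsx))
  have hABP : A ∪ B ∈ P := ⟨hS₀A.trans Set.subset_union_left, by rwa [hw']⟩
  have hsub : A ∪ B ⊆ A := hAmax.2 hABP Set.subset_union_left
  have hAB : A ∪ B = A := le_antisymm hsub Set.subset_union_left
  have hwx : w = x := by rw [← hw', hAB]
  exact hsnex (le_antisymm hsx (hwx ▸ hws))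


lemma le_of_cji (h : IsCanonicalExtension e) {u v : C}
    (H : ∀ x : C, CompletelyJoinIrreducible x → x ≤ u → x ≤ v) : u ≤ v := by
  by_contra huv
  obtain ⟨x, hx, hxu, hxv⟩ := sep h huv
  exact hxv (H x hx hxu)

end CEaux

namespace CEaux2
variable {L : Type*} [Lattice L] [BoundedOrder L]

lemma AT_mem (T : Finset L) {a : L} (ha : a ∈ T) :
    a ∈ {c : L | ∃ M : Finset L, JoinAdmissible M ∧ (∀ m ∈ M, ∃ x ∈ T, m ≤ x) ∧ c = M.sup id} :=
  ⟨{a}, fun c => by simp, fun m hm => ⟨a, ha, by simp_all⟩, by simp⟩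

lemma AT_isAIdeal (T : Finset L) :
    IsAIdeal {c : L | ∃ M : Finset L, JoinAdmissible M ∧ (∀ m ∈ M, ∃ x ∈ T, m ≤ x) ∧ c = M.sup id} := by
  classical
  constructor
  · rintro c ⟨M, hadm, hbd, rfl⟩ b hb
    have hsup' : (M.image fun m => b ⊓ m).sup id = b := by
      rw [Finset.sup_image]
      simpa [Function.comp] using ((hadm b).symm.trans (inf_eq_left.mpr hb))
    refine ⟨M.image (fun m => b ⊓ m), ?_, ?_, hsup'.symm⟩
    · intro a
      rw [hsup', Finset.sup_image]
      have h1 := hadm (a ⊓ b)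
      rw [inf_assoc, inf_eq_left.mpr hb] at h1
      rw [h1]
      exact Finset.sup_congr rfl (fun m _ => by simp [Function.comp, inf_assoc])
    · intro m' hm'
      obtain ⟨m, hm, rfl⟩ := Finset.mem_image.mp hm'
      obtain ⟨x, hx, hmx⟩ := hbd m hm
      exact ⟨x, hx, inf_le_right.trans hmx⟩
  · intro N hNA hNadm
    have key : ∀ n ∈ N, ∃ Mn : Finset L,
        JoinAdmissible Mn ∧ (∀ m ∈ Mn, ∃ x ∈ T, m ≤ x) ∧ n = Mn.sup id := fun n hn => hNA hn
    choose! Ms hadm hbd hsup using key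
    refine ⟨N.biUnion Ms, ?_, ?_, ?_⟩
    · intro a
      rw [Finset.sup_biUnion, Finset.sup_biUnion]
      calc a ⊓ N.sup (fun n => (Ms n).sup id)
          = a ⊓ N.sup id := by
            rw [Finset.sup_congr rfl (fun n hn => (hsup n hn).symm)]; rfl
        _ = N.sup (fun n => a ⊓ n) := hNadm a
        _ = N.sup (fun n => (Ms n).sup (fun m => a ⊓ m)) := by
            refine Finset.sup_congr rfl (fun n hn => ?_)
            conv_lhs => rw [hsup n hn]
            exact hadm n hn a
    · intro m hm
      obtain ⟨n, hn, hmn⟩ := Finset.mem_biUnion.mp hm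
      exact hbd n hn m hmn
    · rw [Finset.sup_biUnion]
      exact (Finset.sup_congr rfl (fun n hn => (hsup n hn).symm)).symm


end CEaux2

/-- Characterization of membership in the a-ideal generated by a finite set `T`:
`b ∈ ⟨T⟩_ai` iff `b̂ ⊆ ⋃_{a ∈ T} â` iff `b` is the join of a finite join-admissible
set of elements below elements of `T`. -/
theorem mem_aIdealGen_tfae {L C : Type*} [Lattice L] [BoundedOrder L]
    [CompleteLattice C] (e : L → C) (h : IsCanonicalExtension e)
    (T : Finset L) (b : L) :
    (b ∈ aIdealGen (T : Set L) ↔ hatSet e b ⊆ ⋃ a ∈ T, hatSet e a) ∧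
    (b ∈ aIdealGen (T : Set L) ↔
      ∃ M : Finset L, JoinAdmissible M ∧ (∀ m ∈ M, ∃ a ∈ T, m ≤ a) ∧ b = M.sup id) := by
  classical
  have h13 : b ∈ aIdealGen (T : Set L) ↔
      ∃ M : Finset L, JoinAdmissible M ∧ (∀ m ∈ M, ∃ a ∈ T, m ≤ a) ∧ b = M.sup id := by
    constructor
    · intro h1
      exact Set.mem_sInter.mp h1 _ ⟨CEaux2.AT_isAIdeal T, fun a ha => CEaux2.AT_mem T ha⟩
    · rintro ⟨M, hadm, hbd, rfl⟩
      apply Set.mem_sInter.mpr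
      rintro A ⟨⟨hdown, hjoin⟩, hTA⟩
      refine hjoin M ?_ hadm
      intro m hm
      obtain ⟨a, haT, hma⟩ := hbd m hm
      exact hdown a (hTA haT) m hma
  have h32 : (∃ M : Finset L, JoinAdmissible M ∧ (∀ m ∈ M, ∃ a ∈ T, m ≤ a) ∧ b = M.sup id) →
      hatSet e b ⊆ ⋃ a ∈ T, hatSet e a := by
    rintro ⟨M, hadm, hbd, hb⟩ x ⟨hx, hxb⟩
    obtain ⟨m, hm, hxm⟩ := CEaux.prime h hadm hx (by rw [← hb]; exact hxb)
    obtain ⟨a, haT, hma⟩ := hbd m hm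
    exact Set.mem_iUnion₂.mpr ⟨a, haT, hx, hxm.trans (CEaux.mono h hma)⟩
  have h23 : (hatSet e b ⊆ ⋃ a ∈ T, hatSet e a) →
      ∃ M : Finset L, JoinAdmissible M ∧ (∀ m ∈ M, ∃ a ∈ T, m ≤ a) ∧ b = M.sup id := by
    intro h2
    have claim : ∀ c : L, c ⊓ b ≤ T.sup (fun a => c ⊓ b ⊓ a) := by
      intro c
      rw [← CEaux.le_iff h]
      apply CEaux.le_of_cji h
      intro x hx hxc
      have hxb : x ≤ e b := by
        rw [h.2.1] at hxc
        exact hxc.trans inf_le_right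
      obtain ⟨a, haT, hxa⟩ := Set.mem_iUnion₂.mp (h2 ⟨hx, hxb⟩)
      have hstep : x ≤ e (c ⊓ b ⊓ a) := by
        rw [h.2.1]
        exact le_inf hxc hxa.2
      exact hstep.trans (CEaux.mono h (Finset.le_sup haT))
    have hMsup : (T.image fun a => b ⊓ a).sup id = b := by
      rw [Finset.sup_image]
      apply le_antisymm
      · exact Finset.sup_le fun a ha => inf_le_left
      · have h3 := claim ⊤
        simp only [top_inf_eq] at h3
        exact h3
    refine ⟨T.image (fun a => b ⊓ a), ?_, ?_, hMsup.symm⟩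
    · intro c
      rw [hMsup, Finset.sup_image]
      apply le_antisymm
      · refine (claim c).trans (Finset.sup_le fun a ha => ?_)
        rw [inf_assoc]
        exact Finset.le_sup (f := (fun m => c ⊓ m) ∘ fun a => b ⊓ a) ha
      · exact Finset.sup_le fun a ha => le_inf inf_le_left (inf_le_right.trans inf_le_left)
    · intro m hm
      obtain ⟨a, haT, rfl⟩ := Finset.mem_image.mp hm
      exact ⟨a, haT, inf_le_right⟩
  exact ⟨h13.trans ⟨h32, h23⟩, h13⟩
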